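/- In a 2-dimensional real normed space X, strict convexity is equivalent to the property that any two linearly independent smooth points of X have linearly independent support functionals. (Here a nonzero point z is smooth if it has a unique support functional, i.e. a unique linear functional f with f(z) = ‖z‖² and sup over the unit sphere of f equal to ‖z‖; X is strictly convex if every linear functional is the support functional of exactly one point.) -/

import Mathlib

open Module

/-- A support functional of `z` is a linear functional `f` with `f z = ‖z‖²`
and `sup_{‖x‖=1} f x = ‖z‖`. -/
def IsSupportFunctional {X : Type*} [NormedAddCommGroup X] [NormedSpace ℝ X]
    (f : X →ₗ[ℝ] ℝ) (z : X) : Prop :=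
  f z = ‖z‖ ^ 2 ∧ sSup (⇑f '' {x : X | ‖x‖ = 1}) = ‖z‖

/-- A nonzero point is smooth if it has exactly one support functional. -/
def IsSmoothPoint {X : Type*} [NormedAddCommGroup X] [NormedSpace ℝ X] (z : X) : Prop :=
  z ≠ 0 ∧ ∃! f : X →ₗ[ℝ] ℝ, IsSupportFunctional f z

/-- `X` is strictly convex if every linear functional is the support functional of
exactly one point of `X`. -/
def IsStrictlyConvexNormed (X : Type*) [NormedAddCommGroup X] [NormedSpace ℝ X] : Prop :=
  ∀ g : X →ₗ[ℝ] ℝ, ∃! z : X, IsSupportFunctional g z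

section Aux

variable {X : Type*} [NormedAddCommGroup X] [NormedSpace ℝ X]

lemma aux_sphere_eq : {x : X | ‖x‖ = 1} = Metric.sphere (0 : X) 1 := by
  ext x; simp [mem_sphere_zero_iff_norm]

/-- In a nontrivial finite-dimensional space, any linear functional attains its
supremum on the unit sphere. -/
lemma aux_exists_isGreatest [FiniteDimensional ℝ X] [Nontrivial X] (f : X →ₗ[ℝ] ℝ) :
    ∃ x : X, ‖x‖ = 1 ∧ IsGreatest (⇑f '' {x : X | ‖x‖ = 1}) (f x) := by
  have hc : IsCompact {x : X | ‖x‖ = 1} := by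
    rw [aux_sphere_eq]; exact isCompact_sphere 0 1
  have hne : {x : X | ‖x‖ = 1}.Nonempty := by
    rw [aux_sphere_eq]; exact NormedSpace.sphere_nonempty.mpr zero_le_one
  obtain ⟨x, hx, hmax⟩ :=
    hc.exists_isMaxOn hne f.continuous_of_finiteDimensional.continuousOn
  exact ⟨x, hx, ⟨x, hx, rfl⟩, by rintro y ⟨u, hu, rfl⟩; exact hmax hu⟩

lemma aux_isGreatest [FiniteDimensional ℝ X] [Nontrivial X] {f : X →ₗ[ℝ] ℝ} {z : X}
    (hf : IsSupportFunctional f z) : IsGreatest (⇑f '' {x : X | ‖x‖ = 1}) ‖z‖ := by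
  obtain ⟨x, hx, hg⟩ := aux_exists_isGreatest f
  have : f x = ‖z‖ := by rw [← hg.csSup_eq, hf.2]
  rwa [this] at hg

lemma aux_bound [FiniteDimensional ℝ X] [Nontrivial X] {f : X →ₗ[ℝ] ℝ} {z : X}
    (hf : IsSupportFunctional f z) (x : X) : f x ≤ ‖z‖ * ‖x‖ := by
  rcases eq_or_ne x 0 with rfl | hx
  · simp
  · have hxn : ‖x‖ ≠ 0 := norm_ne_zero_iff.mpr hx
    have hu : ‖(‖x‖⁻¹ • x)‖ = 1 := by
      rw [norm_smul, norm_inv, norm_norm, inv_mul_cancel₀ hxn]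
    have h1 : f (‖x‖⁻¹ • x) ≤ ‖z‖ := (aux_isGreatest hf).2 ⟨_, hu, rfl⟩
    rw [map_smul, smul_eq_mul] at h1
    have hpos : (0 : ℝ) < ‖x‖ := lt_of_le_of_ne (norm_nonneg x) (Ne.symm hxn)
    calc f x = ‖x‖ * (‖x‖⁻¹ * f x) := by field_simp
    _ ≤ ‖x‖ * ‖z‖ := by
        exact mul_le_mul_of_nonneg_left h1 (norm_nonneg x)
    _ = ‖z‖ * ‖x‖ := mul_comm _ _

lemma aux_abs_bound [FiniteDimensional ℝ X] [Nontrivial X] {f : X →ₗ[ℝ] ℝ} {z : X}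
    (hf : IsSupportFunctional f z) {x : X} (hx : ‖x‖ = 1) : |f x| ≤ ‖z‖ := by
  rw [abs_le]
  constructor
  · have := aux_bound hf (-x)
    simp only [map_neg, norm_neg, hx, mul_one] at this
    linarith
  · have := aux_bound hf x
    simpa [hx] using this

/-- The sup of `c • f` on the sphere, when `f` supports `z`. -/
lemma aux_sSup_smul [FiniteDimensional ℝ X] [Nontrivial X] {f : X →ₗ[ℝ] ℝ} {z : X}
    (hf : IsSupportFunctional f z) (c : ℝ) :
    sSup (⇑(c • f) '' {x : X | ‖x‖ = 1}) = |c| * ‖z‖ := by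
  obtain ⟨x, hx, hg⟩ := aux_exists_isGreatest f
  have hfx : f x = ‖z‖ := by rw [← hg.csSup_eq, hf.2]
  have : IsGreatest (⇑(c • f) '' {x : X | ‖x‖ = 1}) (|c| * ‖z‖) := by
    constructor
    · rcases le_or_gt 0 c with h | h
      · exact ⟨x, hx, by simp [hfx, abs_of_nonneg h]⟩
      · refine ⟨-x, by simpa using hx, ?_⟩
        simp only [LinearMap.smul_apply, map_neg, smul_eq_mul, abs_of_neg h]
        rw [hfx]; ring
    · rintro y ⟨u, hu, rfl⟩
      simp only [LinearMap.smul_apply, smul_eq_mul]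
      calc c * f u ≤ |c * f u| := le_abs_self _
      _ = |c| * |f u| := abs_mul _ _
      _ ≤ |c| * ‖z‖ := mul_le_mul_of_nonneg_left (aux_abs_bound hf hu) (abs_nonneg c)
  exact this.csSup_eq

lemma aux_not_li_pair {Y : Type*} [AddCommGroup Y] [Module ℝ Y] (g : Y) :
    ¬ LinearIndependent ℝ ![g, g] := by
  intro h
  obtain ⟨h1, -⟩ := LinearIndependent.pair_iff.mp h 1 (-1) (by module)
  exact one_ne_zero h1

end Aux

set_option maxHeartbeats 1600000 in
/-- In a normed plane, strict convexity is equivalent to the property that any two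
linearly independent smooth points have linearly independent support functionals. -/
theorem strictlyConvex_iff_smooth_points_have_linearIndependent_support_functionals
    {X : Type*} [NormedAddCommGroup X] [NormedSpace ℝ X]
    (hX : finrank ℝ X = 2) :
    IsStrictlyConvexNormed X ↔
      ∀ z₁ z₂ : X, IsSmoothPoint z₁ → IsSmoothPoint z₂ →
        LinearIndependent ℝ ![z₁, z₂] →
        ∀ f₁ f₂ : X →ₗ[ℝ] ℝ, IsSupportFunctional f₁ z₁ → IsSupportFunctional f₂ z₂ →
          LinearIndependent ℝ ![f₁, f₂] := by
  haveI : FiniteDimensional ℝ X := Module.finite_of_finrank_eq_succ hX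
  haveI : Nontrivial X := Module.nontrivial_of_finrank_pos (by omega : 0 < finrank ℝ X)
  constructor
  · -- strictly convex → property
    intro h z₁ z₂ hs₁ hs₂ hli f₁ f₂ hf₁ hf₂
    by_contra hdep
    rw [LinearIndependent.pair_iff] at hdep
    push_neg at hdep
    obtain ⟨s, t, hst, hne⟩ := hdep
    have hz₁ : z₁ ≠ 0 := hs₁.1
    have hz₂ : z₂ ≠ 0 := hs₂.1
    have hz₁n : (0:ℝ) < ‖z₁‖ := norm_pos_iff.mpr hz₁
    have hz₂n : (0:ℝ) < ‖z₂‖ := norm_pos_iff.mpr hz₂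
    have hf₁0 : f₁ ≠ 0 := by
      intro h0
      have := hf₁.1
      rw [h0] at this
      simp only [LinearMap.zero_apply] at this
      nlinarith
    have hf₂0 : f₂ ≠ 0 := by
      intro h0
      have := hf₂.1
      rw [h0] at this
      simp only [LinearMap.zero_apply] at this
      nlinarith
    have ht : t ≠ 0 := by
      rintro rfl
      have hs : s ≠ 0 := by tauto
      apply hf₁0
      have : s • f₁ = 0 := by simpa using hst
      have := congrArg (fun g => s⁻¹ • g) this
      simpa [smul_smul, inv_mul_cancel₀ hs] using this
    set c : ℝ := -s / t with hc
    have hf₂eq : f₂ = c • f₁ := by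
      have : t • f₂ = (-s) • f₁ := by
        have := hst
        apply_fun (fun g => g - s • f₁) at this
        simp only [add_sub_cancel_left, zero_sub] at this
        rw [this]; exact (neg_smul s f₁).symm
      have := congrArg (fun g => t⁻¹ • g) this
      simp [smul_smul, inv_mul_cancel₀ ht, hc, div_eq_inv_mul, mul_comm] at this
      rw [this, hc]; module
    have hc0 : c ≠ 0 := by
      rintro h0
      rw [h0, zero_smul] at hf₂eq
      exact hf₂0 hf₂eq
    have hcabs : (0:ℝ) < |c| := abs_pos.mpr hc0
    -- ‖z₂‖ = |c| * ‖z₁‖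
    have hnorm : ‖z₂‖ = |c| * ‖z₁‖ := by
      rw [← hf₂.2, hf₂eq, aux_sSup_smul hf₁]
    -- f₁ supports c⁻¹ • z₂
    have hsup : IsSupportFunctional f₁ (c⁻¹ • z₂) := by
      have hw : ‖c⁻¹ • z₂‖ = ‖z₁‖ := by
        rw [norm_smul, Real.norm_eq_abs, abs_inv, hnorm]
        field_simp
      constructor
      · have h1 : c * f₁ z₂ = ‖z₂‖ ^ 2 := by
          have := hf₂.1
          rw [hf₂eq] at this
          simpa using this
        have : f₁ z₂ = ‖z₂‖ ^ 2 / c := by field_simp [eq_div_iff hc0]; linarith [h1]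
        rw [map_smul, smul_eq_mul, this, hw, hnorm]
        rw [mul_pow, sq_abs]
        field_simp
      · rw [hf₁.2, hw]
    -- uniqueness gives z₁ = c⁻¹ • z₂
    obtain ⟨w, hw, huniq⟩ := h f₁
    have e1 : z₁ = w := huniq z₁ hf₁
    have e2 : c⁻¹ • z₂ = w := huniq _ hsup
    have e3 : z₂ = c • z₁ := by
      rw [e1, ← e2, smul_smul, mul_inv_cancel₀ hc0, one_smul]
    obtain ⟨-, h1⟩ := LinearIndependent.pair_iff.mp hli c (-1)
      (by rw [e3]; module)
    norm_num at h1
  · -- property → strictly convex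
    intro h g
    -- existence
    obtain ⟨x₀, hx₀, hg₀⟩ := aux_exists_isGreatest g
    set M : ℝ := g x₀ with hM
    have hM0 : 0 ≤ M := by
      have h1 : g (-x₀) ≤ M := hg₀.2 ⟨-x₀, by simpa using hx₀, rfl⟩
      simp only [map_neg] at h1
      linarith
    have hsSup : sSup (⇑g '' {x : X | ‖x‖ = 1}) = M := hg₀.csSup_eq
    have hex : IsSupportFunctional g (M • x₀) := by
      constructor
      · rw [map_smul, smul_eq_mul, ← hM, norm_smul, Real.norm_eq_abs, abs_of_nonneg hM0,
          hx₀, mul_one, sq]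
      · rw [hsSup, norm_smul, Real.norm_eq_abs, abs_of_nonneg hM0, hx₀, mul_one]
    refine ⟨M • x₀, hex, ?_⟩
    -- uniqueness: it suffices to show any two supported points are equal
    have key : ∀ z z' : X, IsSupportFunctional g z → IsSupportFunctional g z' → z = z' := by
      intro z z' hz hz'
      have hnz : ‖z‖ = M := by rw [← hz.2, hsSup]
      have hnz' : ‖z'‖ = M := by rw [← hz'.2, hsSup]
      by_contra hne
      have hMpos : 0 < M := by
        rcases lt_or_eq_of_le hM0 with h | h
        · exact h
        · exfalso
          apply hne
          have : z = 0 := norm_eq_zero.mp (by rw [hnz, ← h])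
          have : z' = 0 := norm_eq_zero.mp (by rw [hnz', ← h])
          rw [‹z = 0›, this]
      have hgz : g z = M ^ 2 := by rw [hz.1, hnz]
      have hgz' : g z' = M ^ 2 := by rw [hz'.1, hnz']
      -- z, z' linearly independent
      have hzz' : LinearIndependent ℝ ![z, z'] := by
        rw [LinearIndependent.pair_iff]
        intro s t hst
        have h1 : (s + t) * M ^ 2 = 0 := by
          have := congrArg g hst
          simp only [map_add, map_smul, smul_eq_mul, map_zero, hgz, hgz'] at this
          linarith
        have h2 : s + t = 0 := by
          have : M ^ 2 ≠ 0 := by positivity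
          exact (mul_eq_zero.mp h1).resolve_right this
        have ht : t = -s := by linarith
        rw [ht] at hst
        have h3 : s • (z - z') = 0 := by
          rw [smul_sub]
          rw [neg_smul] at hst
          abel_nf
          abel_nf at hst
          exact hst
        rcases smul_eq_zero.mp h3 with h4 | h4
        · constructor
          · exact h4
          · rw [ht, h4, neg_zero]
        · exact absurd (sub_eq_zero.mp h4) hne
      -- the two midpoints
      set w₁ : X := (2/3 : ℝ) • z + (1/3 : ℝ) • z' with hw₁
      set w₂ : X := (1/3 : ℝ) • z + (2/3 : ℝ) • z' with hw₂
      have hgw : ∀ (a b : ℝ), a + b = 1 → g (a • z + b • z') = M ^ 2 := by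
        intro a b hab
        simp only [map_add, map_smul, smul_eq_mul, hgz, hgz']
        nlinarith
      have hnw : ∀ (a b : ℝ), 0 ≤ a → 0 ≤ b → a + b = 1 → ‖a • z + b • z'‖ = M := by
        intro a b ha hb hab
        have hle : ‖a • z + b • z'‖ ≤ M := by
          calc ‖a • z + b • z'‖ ≤ ‖a • z‖ + ‖b • z'‖ := norm_add_le _ _
          _ = a * M + b * M := by
              rw [norm_smul, norm_smul, Real.norm_eq_abs, Real.norm_eq_abs,
                abs_of_nonneg ha, abs_of_nonneg hb, hnz, hnz']
          _ = M := by nlinarith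
        have hge : M ≤ ‖a • z + b • z'‖ := by
          have h1 : g (a • z + b • z') ≤ ‖z‖ * ‖a • z + b • z'‖ := aux_bound hz _
          rw [hgw a b hab, hnz] at h1
          nlinarith
        linarith
      have hnw₁ : ‖w₁‖ = M := hnw (2/3) (1/3) (by norm_num) (by norm_num) (by norm_num)
      have hnw₂ : ‖w₂‖ = M := hnw (1/3) (2/3) (by norm_num) (by norm_num) (by norm_num)
      have hgw₁ : IsSupportFunctional g w₁ :=
        ⟨by rw [hw₁, hgw _ _ (by norm_num), hnw₁], by rw [hsSup, hnw₁]⟩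
      have hgw₂ : IsSupportFunctional g w₂ :=
        ⟨by rw [hw₂, hgw _ _ (by norm_num), hnw₂], by rw [hsSup, hnw₂]⟩
      -- z, z' span the whole space
      have hcard : Fintype.card (Fin 2) = finrank ℝ X := by simp [hX]
      have hspan : Submodule.span ℝ (Set.range ![z, z']) = ⊤ :=
        hzz'.span_eq_top_of_card_eq_finrank hcard
      -- every support functional of an interior point equals g
      have huniqf : ∀ (a bb : ℝ), 0 < a → 0 < bb → a + bb = 1 →
          ∀ f : X →ₗ[ℝ] ℝ, IsSupportFunctional f (a • z + bb • z') → f = g := by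
        intro a bb ha hbb hab f hf
        have hnwa : ‖a • z + bb • z'‖ = M := hnw a bb ha.le hbb.le hab
        have hfz : f z ≤ M ^ 2 := by
          have := aux_bound hf z
          rw [hnwa, hnz] at this
          nlinarith
        have hfz' : f z' ≤ M ^ 2 := by
          have := aux_bound hf z'
          rw [hnwa, hnz'] at this
          nlinarith
        have hsum : a * f z + bb * f z' = M ^ 2 := by
          have := hf.1
          rw [hnwa] at this
          simpa [map_add, map_smul, smul_eq_mul] using this
        have hfzeq : f z = M ^ 2 ∧ f z' = M ^ 2 := by
          constructor <;> nlinarith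
        apply LinearMap.ext_on_range hspan
        intro i
        fin_cases i
        · show f z = g z
          rw [hfzeq.1, hgz]
        · show f z' = g z'
          rw [hfzeq.2, hgz']
      have hw₁0 : w₁ ≠ 0 := by
        intro h0
        rw [h0, norm_zero] at hnw₁
        linarith
      have hw₂0 : w₂ ≠ 0 := by
        intro h0
        rw [h0, norm_zero] at hnw₂
        linarith
      have hsm₁ : IsSmoothPoint w₁ :=
        ⟨hw₁0, g, hgw₁, fun f hf => huniqf _ _ (by norm_num) (by norm_num) (by norm_num) f hf⟩
      have hsm₂ : IsSmoothPoint w₂ :=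
        ⟨hw₂0, g, hgw₂, fun f hf => huniqf _ _ (by norm_num) (by norm_num) (by norm_num) f hf⟩
      -- w₁, w₂ linearly independent
      have hliw : LinearIndependent ℝ ![w₁, w₂] := by
        rw [LinearIndependent.pair_iff]
        intro s t hst
        have : (s * (2/3) + t * (1/3)) • z + (s * (1/3) + t * (2/3)) • z' = 0 := by
          rw [hw₁, hw₂] at hst
          rw [← hst]
          module
        obtain ⟨h1, h2⟩ := LinearIndependent.pair_iff.mp hzz' _ _ this
        constructor <;> linarith
      exact aux_not_li_pair g (h w₁ w₂ hsm₁ hsm₂ hliw g g hgw₁ hgw₂)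
    intro y hy
    exact key y (M • x₀) hy hex
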